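/- For any integer r ≥ 2 and any x > 0, Σ_{m=1}^{∞} ψ(mx)/m^r + (-x)^{r-1} Σ_{m=1}^{∞} ψ(m/x)/m^r = ζ(r+1)((-x)^r - 1/x) - Σ_{ℓ=1}^{r} ζ(ℓ)ζ(r-ℓ+1)(-x)^{ℓ-1}, with the convention ζ(1) = γ (Euler's constant). -/

import Mathlib

open Real

/-- The digamma function, via the series `ψ(z) = -γ + ∑_{n≥0} (1/(n+1) - 1/(n+z))`. -/
noncomputable def digamma (z : ℝ) : ℝ :=
  -Real.eulerMascheroniConstant + ∑' n : ℕ, (1 / ((n : ℝ) + 1) - 1 / ((n : ℝ) + z))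
/-- Riemann zeta at natural arguments, with the convention `ζ(1) = γ`. -/
noncomputable def zetaC (n : ℕ) : ℝ :=
  if n = 1 then Real.eulerMascheroniConstant else (riemannZeta (n : ℝ)).re


noncomputable def zr (k : ℕ) : ℝ := ∑' n : ℕ, 1 / ((n : ℝ) + 1) ^ k

lemma summable_zr {k : ℕ} (hk : 2 ≤ k) :
    Summable (fun n : ℕ => 1 / ((n : ℝ) + 1) ^ k) := by
  have h := (summable_nat_add_iff (f := fun n : ℕ => 1 / (n : ℝ) ^ k) 1).2
    (Real.summable_one_div_nat_pow.2 (by omega))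
  refine h.congr fun n => by push_cast; ring

lemma zetaC_eq {k : ℕ} (hk : 2 ≤ k) : zetaC k = zr k := by
  have h1 : (1:ℝ) < Complex.re ((k : ℝ) : ℂ) := by
    simp only [Complex.ofReal_re]; exact_mod_cast (by omega : 1 < k)
  have h2 := zeta_eq_tsum_one_div_nat_add_one_cpow h1
  have hsum : Summable fun n : ℕ => 1 / ((n : ℂ) + 1) ^ ((k : ℝ) : ℂ) := by
    have h := (summable_nat_add_iff (f := fun n : ℕ => 1 / (n : ℂ) ^ ((k:ℝ):ℂ)) 1).2
      (Complex.summable_one_div_nat_cpow.2 h1)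
    exact h.congr fun n => by push_cast; ring_nf
  rw [zetaC, if_neg (by omega), h2, Complex.re_tsum hsum, zr]
  congr 1
  ext n
  have : ((n : ℂ) + 1) ^ ((k : ℝ) : ℂ) = (((n:ℝ) + 1 : ℝ) : ℂ) ^ (k : ℕ) := by
    push_cast
    rw [Complex.cpow_natCast]
  rw [this]
  rw [← Complex.ofReal_pow, ← Complex.ofReal_one, ← Complex.ofReal_div, Complex.ofReal_re]

lemma summable_inner {z : ℝ} (hz : 0 < z) :
    Summable (fun n : ℕ => z / (((n : ℝ) + 1) * ((n : ℝ) + 1 + z))) := by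
  refine Summable.of_nonneg_of_le (fun n => by positivity) (fun n => ?_)
    ((summable_zr (le_refl 2)).mul_left z)
  have h1 : (0:ℝ) < (n:ℝ) + 1 := by positivity
  rw [mul_one_div, pow_two]
  apply div_le_div_of_nonneg_left hz.le (by positivity)
  nlinarith

lemma hasSum_telescope {z : ℝ} (hz : 0 < z) :
    HasSum (fun n : ℕ => 1 / ((n : ℝ) + z) - 1 / ((n : ℝ) + 1 + z)) (1 / z) := by
  rw [hasSum_iff_tendsto_nat_of_nonneg]
  · have key : ∀ N : ℕ, ∑ i ∈ Finset.range N,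
        (1 / ((i : ℝ) + z) - 1 / ((i : ℝ) + 1 + z)) = 1 / z - 1 / ((N : ℝ) + z) := by
      intro N
      have h := Finset.sum_range_sub' (f := fun i : ℕ => 1 / ((i : ℝ) + z)) N
      have h2 : ∑ i ∈ Finset.range N, (1 / ((i : ℝ) + z) - 1 / ((i : ℝ) + 1 + z))
          = ∑ i ∈ Finset.range N, (1 / ((i : ℝ) + z) - 1 / (((i+1 : ℕ) : ℝ) + z)) := by
        refine Finset.sum_congr rfl fun i _ => by push_cast; ring_nf
      rw [h2, h]
      norm_num
    simp_rw [key]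
    have : Filter.Tendsto (fun N : ℕ => 1 / ((N : ℝ) + z)) Filter.atTop (nhds 0) := by
      have : Filter.Tendsto (fun N : ℕ => ((N : ℝ) + z)) Filter.atTop Filter.atTop :=
        Filter.tendsto_atTop_add_const_right _ z tendsto_natCast_atTop_atTop
      simpa only [one_div, Pi.inv_def] using this.inv_tendsto_atTop
    simpa using tendsto_const_nhds.sub this
  · intro n
    have h1 : (0:ℝ) < (n:ℝ) + z := by positivity
    have h2 : (0:ℝ) < (n:ℝ) + 1 + z := by positivity
    rw [sub_nonneg]
    apply one_div_le_one_div_of_le h1; linarith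

lemma digamma_eq {z : ℝ} (hz : 0 < z) :
    digamma z = -Real.eulerMascheroniConstant - 1 / z
      + ∑' n : ℕ, z / (((n : ℝ) + 1) * ((n : ℝ) + 1 + z)) := by
  rw [digamma]
  have key : ∀ n : ℕ, 1 / ((n : ℝ) + 1) - 1 / ((n : ℝ) + z)
      = z / (((n : ℝ) + 1) * ((n : ℝ) + 1 + z))
        - (1 / ((n : ℝ) + z) - 1 / ((n : ℝ) + 1 + z)) := by
    intro n
    have h1 : ((n:ℝ) + 1) ≠ 0 := by positivity
    have h2 : ((n:ℝ) + z) ≠ 0 := by positivity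
    have h3 : ((n:ℝ) + 1 + z) ≠ 0 := by positivity
    field_simp
    ring
  rw [tsum_congr key, Summable.tsum_sub (summable_inner hz) (hasSum_telescope hz).summable,
    (hasSum_telescope hz).tsum_eq]
  ring

lemma summable_f32 : Summable (fun n : ℕ => 1 / (((n:ℝ)+1) * Real.sqrt ((n:ℝ)+1))) := by
  have h := (summable_nat_add_iff (f := fun n : ℕ => 1 / (n:ℝ) ^ (3/2 : ℝ)) 1).2
    (Real.summable_one_div_nat_rpow.2 (by norm_num))
  refine h.congr fun n => ?_
  have hpos : (0:ℝ) < (n:ℝ) + 1 := by positivity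
  have : ((n+1 : ℕ) : ℝ) ^ (3/2 : ℝ) = ((n:ℝ)+1) * Real.sqrt ((n:ℝ)+1) := by
    push_cast
    rw [show (3/2 : ℝ) = 1 + 1/2 by norm_num, Real.rpow_add hpos, Real.rpow_one,
      ← Real.sqrt_eq_rpow]
  rw [this]

lemma summable_G (s : ℕ) {x : ℝ} (hx : 0 < x) :
    Summable (fun p : ℕ × ℕ => x / (((p.1:ℝ)+1)^(s+1) * ((p.2:ℝ)+1)
      * (((p.2:ℝ)+1) + ((p.1:ℝ)+1) * x))) := by
  have hmaj : Summable (fun p : ℕ × ℕ => Real.sqrt x *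
      (1 / (((p.1:ℝ)+1) * Real.sqrt ((p.1:ℝ)+1)) * (1 / (((p.2:ℝ)+1) * Real.sqrt ((p.2:ℝ)+1))))) :=
    (summable_f32.mul_of_nonneg summable_f32 (fun n => by positivity)
      (fun n => by positivity)).mul_left _
  refine Summable.of_nonneg_of_le (fun p => by positivity) (fun p => ?_) hmaj
  set M : ℝ := (p.1:ℝ) + 1 with hM
  set N : ℝ := (p.2:ℝ) + 1 with hN
  have hM1 : (1:ℝ) ≤ M := by rw [hM]; linarith [Nat.cast_nonneg (α := ℝ) p.1]
  have hN1 : (1:ℝ) ≤ N := by rw [hN]; linarith [Nat.cast_nonneg (α := ℝ) p.2]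
  have hM0 : (0:ℝ) < M := by linarith
  have hN0 : (0:ℝ) < N := by linarith
  have hsx : (0:ℝ) < Real.sqrt x := Real.sqrt_pos.2 hx
  have hsM : (0:ℝ) < Real.sqrt M := Real.sqrt_pos.2 hM0
  have hsN : (0:ℝ) < Real.sqrt N := Real.sqrt_pos.2 hN0
  -- key: sqrt N * sqrt M * sqrt x ≤ N + M * x
  have key : Real.sqrt N * Real.sqrt M * Real.sqrt x ≤ N + M * x := by
    have h1 : Real.sqrt N * Real.sqrt M * Real.sqrt x = Real.sqrt (N * (M * x)) := by
      rw [Real.sqrt_mul hN0.le, Real.sqrt_mul hM0.le]; ring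
    rw [h1]
    have h2 : N * (M * x) ≤ (N + M * x)^2 := by nlinarith [mul_pos hM0 hx]
    calc Real.sqrt (N * (M * x)) ≤ Real.sqrt ((N + M*x)^2) := Real.sqrt_le_sqrt h2
      _ = N + M * x := Real.sqrt_sq (by nlinarith [mul_pos hM0 hx])
  have hMr : M ≤ M ^ (s+1) := by
    calc M = M ^ 1 := (pow_one M).symm
    _ ≤ M ^ (s+1) := pow_le_pow_right₀ hM1 (by omega)
  have hDpos : (0:ℝ) < M ^ (s+1) * N * (N + M * x) := by positivity
  have hEpos : (0:ℝ) < Real.sqrt x * ((M * Real.sqrt M) * (N * Real.sqrt N)) := by positivity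
  have hED : Real.sqrt x * ((M * Real.sqrt M) * (N * Real.sqrt N)) ≤ M ^ (s+1) * N * (N + M*x) := by
    calc Real.sqrt x * ((M * Real.sqrt M) * (N * Real.sqrt N))
        = (M * N) * (Real.sqrt N * Real.sqrt M * Real.sqrt x) := by ring
      _ ≤ (M * N) * (N + M * x) := by
          apply mul_le_mul_of_nonneg_left key (by positivity)
      _ ≤ M ^ (s+1) * N * (N + M * x) := by
          have : M * N ≤ M ^ (s+1) * N := by
            apply mul_le_mul_of_nonneg_right hMr hN0.le
          nlinarith [mul_pos hM0 hx]
  calc x / (M ^ (s+1) * N * (N + M * x))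
      ≤ x / (Real.sqrt x * ((M * Real.sqrt M) * (N * Real.sqrt N))) :=
        div_le_div_of_nonneg_left hx.le hEpos hED
    _ = Real.sqrt x / ((M * Real.sqrt M) * (N * Real.sqrt N)) := by
        have hne : (M * Real.sqrt M) * (N * Real.sqrt N) ≠ 0 := by positivity
        rw [div_eq_div_iff hEpos.ne' hne]
        linear_combination (-((M * Real.sqrt M) * (N * Real.sqrt N))) * Real.mul_self_sqrt hx.le
    _ = Real.sqrt x * (1 / (M * Real.sqrt M) * (1 / (N * Real.sqrt N))) := by
        rw [div_mul_div_comm, one_mul, mul_one_div]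

lemma summable_pow_prod {a b : ℕ} (ha : 2 ≤ a) (hb : 2 ≤ b) :
    Summable (fun p : ℕ × ℕ => (1 / ((p.1:ℝ)+1)^a) * (1 / ((p.2:ℝ)+1)^b)) :=
  (summable_zr ha).mul_of_nonneg (summable_zr hb) (fun n => by positivity)
    (fun n => by positivity)

lemma tsum_pow_prod {a b : ℕ} (ha : 2 ≤ a) (hb : 2 ≤ b) :
    ∑' p : ℕ × ℕ, (1 / ((p.1:ℝ)+1)^a) * (1 / ((p.2:ℝ)+1)^b) = zr a * zr b := by
  rw [Summable.tsum_prod (summable_pow_prod ha hb)]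
  calc ∑' (m : ℕ) (n : ℕ), (1 / ((m:ℝ)+1)^a) * (1 / ((n:ℝ)+1)^b)
      = ∑' m : ℕ, (1 / ((m:ℝ)+1)^a) * zr b := by
        exact tsum_congr fun m => tsum_mul_left
    _ = zr a * zr b := tsum_mul_right

lemma seriesF (s : ℕ) {x : ℝ} (hx : 0 < x) :
    ∑' m : ℕ, digamma (((m:ℝ)+1) * x) / ((m:ℝ)+1)^(s+2)
      = -Real.eulerMascheroniConstant * zr (s+2) - zr (s+3) / x
        + ∑' p : ℕ × ℕ, x / (((p.1:ℝ)+1)^(s+1) * ((p.2:ℝ)+1)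
            * (((p.2:ℝ)+1) + ((p.1:ℝ)+1) * x)) := by
  have hG := summable_G s hx
  have hprod := (summable_prod_of_nonneg (f := fun p : ℕ × ℕ =>
    x / (((p.1:ℝ)+1)^(s+1) * ((p.2:ℝ)+1) * (((p.2:ℝ)+1) + ((p.1:ℝ)+1) * x)))
    (fun p => by positivity)).1 hG
  have point : ∀ m : ℕ, digamma (((m:ℝ)+1) * x) / ((m:ℝ)+1)^(s+2)
      = (-Real.eulerMascheroniConstant * (1/((m:ℝ)+1)^(s+2))
          + (-(1/x)) * (1/((m:ℝ)+1)^(s+3)))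
        + ∑' n : ℕ, x / (((m:ℝ)+1)^(s+1) * ((n:ℝ)+1) * (((n:ℝ)+1) + ((m:ℝ)+1) * x)) := by
    intro m
    have hM : (0:ℝ) < (m:ℝ)+1 := by positivity
    have hz : (0:ℝ) < ((m:ℝ)+1) * x := by positivity
    rw [digamma_eq hz, add_div]
    have hin : (∑' n : ℕ, ((m:ℝ)+1) * x / (((n:ℝ)+1) * ((n:ℝ)+1+((m:ℝ)+1)*x)))
          / ((m:ℝ)+1)^(s+2)
        = ∑' n : ℕ, x / (((m:ℝ)+1)^(s+1) * ((n:ℝ)+1) * (((n:ℝ)+1) + ((m:ℝ)+1) * x)) := by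
      rw [← tsum_div_const]
      refine tsum_congr fun n => ?_
      have hN : (0:ℝ) < (n:ℝ)+1 := by positivity
      have hNz : (0:ℝ) < (n:ℝ)+1+((m:ℝ)+1)*x := by positivity
      field_simp
      ring
    rw [hin]
    congr 1
    field_simp
    ring
  rw [tsum_congr point]
  have hA : Summable (fun m : ℕ => -Real.eulerMascheroniConstant * (1/((m:ℝ)+1)^(s+2))
      + (-(1/x)) * (1/((m:ℝ)+1)^(s+3))) :=
    ((summable_zr (by omega)).mul_left _).add ((summable_zr (by omega)).mul_left _)
  rw [Summable.tsum_add hA hprod.2, Summable.tsum_add ((summable_zr (k := s+2) (by omega)).mul_left _)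
    ((summable_zr (k := s+3) (by omega)).mul_left _), tsum_mul_left, tsum_mul_left,
    ← Summable.tsum_prod hG]
  show -Real.eulerMascheroniConstant * zr (s+2) + (-(1/x)) * zr (s+3) + _ = _
  ring

lemma key_pointwise (s : ℕ) {x M N : ℝ} (hx : 0 < x) (hM : 0 < M) (hN : 0 < N) :
    x / (M^(s+1) * N * (N + M * x)) + (-x)^(s+1) * (1 / (N^(s+1) * M * (M * x + N)))
      = ∑ j ∈ Finset.range s, -((-x)^(j+1) / (M^(s+1-j) * N^(j+2))) := by
  have hD : (0:ℝ) < M * x + N := by positivity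
  set w : ℕ → ℝ := fun j => (-x)^(j+1) / (M^(s+1-j) * N^(j+1) * (M*x+N)) with hw
  have key : ∀ j ∈ Finset.range s, -((-x)^(j+1) / (M^(s+1-j) * N^(j+2))) = w (j+1) - w j := by
    intro j hj
    rw [Finset.mem_range] at hj
    obtain ⟨k, hk⟩ : ∃ k, s - j = k + 1 := ⟨s - j - 1, by omega⟩
    rw [hw]
    simp only
    rw [show s + 1 - j = k + 2 by omega, show s + 1 - (j+1) = k + 1 by omega]
    field_simp
    ring
  rw [Finset.sum_congr rfl key, Finset.sum_range_sub w s, hw]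
  simp only
  rw [show s + 1 - s = 1 by omega, show s + 1 - 0 = s + 1 by omega]
  field_simp
  ring

theorem vlasenko_zagier_two_term (r : ℕ) (hr : 2 ≤ r) (x : ℝ) (hx : 0 < x) :
    (∑' m : ℕ, digamma (((m : ℝ) + 1) * x) / ((m : ℝ) + 1) ^ r)
      + (-x) ^ (r - 1) * ∑' m : ℕ, digamma (((m : ℝ) + 1) / x) / ((m : ℝ) + 1) ^ r
    = zetaC (r + 1) * ((-x) ^ r - 1 / x)
      - ∑ ℓ ∈ Finset.Icc 1 r, zetaC ℓ * zetaC (r - ℓ + 1) * (-x) ^ (ℓ - 1) := by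
  obtain ⟨s, rfl⟩ : ∃ s, r = s + 2 := ⟨r - 2, by omega⟩
  have hx' : (0:ℝ) < 1/x := by positivity
  have hxne : x ≠ 0 := hx.ne'
  -- second sum via seriesF at 1/x
  have hdiv : (∑' m : ℕ, digamma (((m : ℝ) + 1) / x) / ((m : ℝ) + 1) ^ (s+2))
      = ∑' m : ℕ, digamma (((m : ℝ) + 1) * (1/x)) / ((m : ℝ) + 1) ^ (s+2) := by
    refine tsum_congr fun m => ?_
    rw [mul_one_div]
  rw [hdiv, seriesF s hx, seriesF s hx', show s + 2 - 1 = s + 1 by omega]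
  -- the double sums
  set G : ℕ × ℕ → ℝ := fun p => x / (((p.1:ℝ)+1)^(s+1) * ((p.2:ℝ)+1)
    * (((p.2:ℝ)+1) + ((p.1:ℝ)+1) * x)) with hGdef
  set G' : ℕ × ℕ → ℝ := fun p => (1/x) / (((p.1:ℝ)+1)^(s+1) * ((p.2:ℝ)+1)
    * (((p.2:ℝ)+1) + ((p.1:ℝ)+1) * (1/x))) with hG'def
  set hsw : ℕ × ℕ → ℝ := fun p => 1 / (((p.2:ℝ)+1)^(s+1) * ((p.1:ℝ)+1)
    * (((p.1:ℝ)+1) * x + ((p.2:ℝ)+1))) with hswdef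
  have hG : Summable G := summable_G s hx
  have hG' : Summable G' := summable_G s hx'
  have hG'sw : ∀ p : ℕ × ℕ, G' p = hsw p.swap := by
    intro p
    rw [hG'def, hswdef]
    simp only [Prod.fst_swap, Prod.snd_swap]
    have h1 : (0:ℝ) < (p.1:ℝ)+1 := by positivity
    have h2 : (0:ℝ) < (p.2:ℝ)+1 := by positivity
    have h3 : (0:ℝ) < ((p.2:ℝ)+1) + ((p.1:ℝ)+1) * (1/x) := by positivity
    field_simp
  have hswsum : Summable hsw := by
    have := (hG'.congr hG'sw).comp_injective (Equiv.prodComm ℕ ℕ).symm.injective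
    exact this.congr fun p => by simp [Equiv.prodComm]
  have hswtsum : ∑' p, G' p = ∑' p, hsw p := by
    rw [tsum_congr hG'sw]
    exact ((Equiv.prodComm ℕ ℕ).symm.tsum_eq (fun p => hsw p)).symm ▸
      ((Equiv.prodComm ℕ ℕ).tsum_eq (fun p => hsw p.swap)) ▸ rfl
  -- combine the two double sums
  have combine : tsum G + (-x)^(s+1) * tsum G'
      = ∑ j ∈ Finset.range s, -((-x)^(j+1)) * (zr (s+1-j) * zr (j+2)) := by
    have : tsum G' = tsum hsw := hswtsum
    rw [this, ← tsum_mul_left, ← Summable.tsum_add hG (hswsum.mul_left _)]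
    have hpt : ∀ p : ℕ × ℕ, G p + (-x)^(s+1) * hsw p
        = ∑ j ∈ Finset.range s,
          (-((-x)^(j+1))) * ((1/((p.1:ℝ)+1)^(s+1-j)) * (1/((p.2:ℝ)+1)^(j+2))) := by
      intro p
      have h1 : (0:ℝ) < (p.1:ℝ)+1 := by positivity
      have h2 : (0:ℝ) < (p.2:ℝ)+1 := by positivity
      rw [hGdef, hswdef]
      simp only
      rw [key_pointwise s hx h1 h2]
      refine Finset.sum_congr rfl fun j hj => ?_
      rw [div_mul_div_comm, one_mul, neg_mul, mul_one_div]
    rw [tsum_congr hpt, Summable.tsum_finsetSum (fun j hj => Summable.mul_left _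
      (summable_pow_prod (by rw [Finset.mem_range] at hj; omega) (by omega)))]
    refine Finset.sum_congr rfl fun j hj => ?_
    rw [Finset.mem_range] at hj
    rw [tsum_mul_left, tsum_pow_prod (by omega) (by omega)]
  -- RHS sum dissection
  have hIcc : Finset.Icc 1 (s+2) = insert 1 (Finset.Icc 2 (s+2)) := by
    ext a
    simp only [Finset.mem_Icc, Finset.mem_insert]
    omega
  rw [hIcc, Finset.sum_insert (by simp), Finset.sum_Icc_succ_top (show 2 ≤ s+1+1 by omega),
    ← Finset.Ico_add_one_right_eq_Icc, Finset.sum_Ico_eq_sum_range,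
    show s+1+1-2 = s by omega]
  have hmid : ∀ j ∈ Finset.range s,
      zetaC (2+j) * zetaC (s+2-(2+j)+1) * (-x)^(2+j-1)
        = zr (j+2) * zr (s+1-j) * (-x)^(j+1) := by
    intro j hj
    rw [Finset.mem_range] at hj
    rw [show 2+j = j+2 by omega, show s+2-(j+2)+1 = s+1-j by omega,
      show j+2-1 = j+1 by omega, zetaC_eq (by omega), zetaC_eq (by omega)]
  rw [Finset.sum_congr rfl hmid]
  have hS : ∑ j ∈ Finset.range s, -((-x)^(j+1)) * (zr (s+1-j) * zr (j+2))
      = -∑ j ∈ Finset.range s, zr (j+2) * zr (s+1-j) * (-x)^(j+1) := by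
    rw [← Finset.sum_neg_distrib]
    exact Finset.sum_congr rfl fun j _ => by ring
  rw [hS] at combine
  -- simplify the special zeta values
  rw [show s+2+1 = s+3 by omega, zetaC_eq (show 2 ≤ s+3 by omega),
    show s+2-1+1 = s+2 by omega, show s+2-(s+1+1)+1 = 1 by omega,
    show s+1+1-1 = s+1 by omega, zetaC_eq (show 2 ≤ s+2 by omega),
    show zetaC 1 = Real.eulerMascheroniConstant from if_pos rfl]
  have hone : ((-x):ℝ)^(1-1) = 1 := pow_zero _
  rw [hone, div_div_eq_mul_div, div_one]
  linear_combination combine
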